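/- Let G be the graph on 4 vertices obtained from the star with center v_1 and pendant vertices v_2, v_3, v_4 by adding the edge {v_2, v_3}, with positive real edge weights d_{12}, d_{13}, d_{14}, d_{23} such that ||d_{12} − d_{13}| < d_{23} < d_{12} + d_{13} (so the edge {v_2,v_3} is not redundant). Then the distance matrix D(G) has exactly 1 positive eigenvalue and 3 negative eigenvalues, i.e., its inertia is (1, 0, 3). -/

import Mathlib

set_option maxHeartbeats 2000000


open Matrix

/-- Number of positive eigenvalues (with multiplicity) of a real symmetric matrix. -/
noncomputable def posEig {n : ℕ} {A : Matrix (Fin n) (Fin n) ℝ} (hA : A.IsHermitian) : ℕ :=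
  Nat.card {i : Fin n // 0 < hA.eigenvalues i}

noncomputable def zeroEig {n : ℕ} {A : Matrix (Fin n) (Fin n) ℝ} (hA : A.IsHermitian) : ℕ :=
  Nat.card {i : Fin n // hA.eigenvalues i = 0}

noncomputable def negEig {n : ℕ} {A : Matrix (Fin n) (Fin n) ℝ} (hA : A.IsHermitian) : ℕ :=
  Nat.card {i : Fin n // hA.eigenvalues i < 0}

/-- Total weight of a walk: sum of weights of its edges. -/
noncomputable def walkWeight {V : Type*} {G : SimpleGraph V} (w : Sym2 V → ℝ)
    {u v : V} (p : G.Walk u v) : ℝ :=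
  (p.edges.map w).sum

/-- Weighted shortest-path distance. -/
noncomputable def wdist {V : Type*} (G : SimpleGraph V) (w : Sym2 V → ℝ) (u v : V) : ℝ :=
  sInf {x | ∃ p : G.Walk u v, walkWeight w p = x}

/-- The distance matrix of a weighted graph on `Fin n`. -/
noncomputable def distMatrix {n : ℕ} (G : SimpleGraph (Fin n)) (w : Sym2 (Fin n) → ℝ) :
    Matrix (Fin n) (Fin n) ℝ :=
  Matrix.of fun i j => wdist G w i j

/- ## Auxiliary material -/

noncomputable def Mmat (a b c d : ℝ) : Matrix (Fin 4) (Fin 4) ℝ :=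
  !![0,a,b,c; a,0,d,a+c; b,d,0,b+c; c,a+c,b+c,0]

lemma walkWeight_nil {V : Type*} {G : SimpleGraph V} (w : Sym2 V → ℝ) {u : V} :
    walkWeight w (SimpleGraph.Walk.nil : G.Walk u u) = 0 := by
  simp [walkWeight]

lemma walkWeight_cons {V : Type*} {G : SimpleGraph V} (w : Sym2 V → ℝ) {u x v : V}
    (h : G.Adj u x) (p : G.Walk x v) :
    walkWeight w (SimpleGraph.Walk.cons h p) = w s(u, x) + walkWeight w p := by
  simp [walkWeight, SimpleGraph.Walk.edges_cons]

lemma eig_trace {n : ℕ} {A : Matrix (Fin n) (Fin n) ℝ} (hA : A.IsHermitian) :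
    ∑ i, hA.eigenvalues i = A.trace := by
  have h := hA.spectral_theorem
  rw [Unitary.conjStarAlgAut_apply] at h
  have hU : star (hA.eigenvectorUnitary : Matrix (Fin n) (Fin n) ℝ) *
      (hA.eigenvectorUnitary : Matrix (Fin n) (Fin n) ℝ) = 1 :=
    Matrix.mem_unitaryGroup_iff'.mp (hA.eigenvectorUnitary).2
  conv_rhs => rw [h, Matrix.trace_mul_cycle, hU, one_mul]
  simp [Matrix.trace_diagonal]

lemma eig_trace3 {n : ℕ} {A : Matrix (Fin n) (Fin n) ℝ} (hA : A.IsHermitian) :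
    ∑ i, (hA.eigenvalues i)^3 = (A * A * A).trace := by
  have h := hA.spectral_theorem
  rw [Unitary.conjStarAlgAut_apply] at h
  set U : Matrix (Fin n) (Fin n) ℝ := (hA.eigenvectorUnitary : Matrix (Fin n) (Fin n) ℝ) with hUdef
  have hU : star U * U = 1 := Matrix.mem_unitaryGroup_iff'.mp (hA.eigenvectorUnitary).2
  set D : Matrix (Fin n) (Fin n) ℝ := Matrix.diagonal (RCLike.ofReal ∘ hA.eigenvalues) with hDdef
  have h3 : A * A * A = U * (D * D * D) * star U := by
    rw [h]
    rw [show U * D * star U * (U * D * star U) * (U * D * star U)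
      = U * (D * (star U * U) * (D * (star U * U) * D)) * star U by noncomm_ring]
    simp only [hU, mul_one, mul_assoc]
  rw [h3, Matrix.trace_mul_cycle, hU, one_mul]
  simp only [hDdef, Matrix.diagonal_mul_diagonal, Matrix.trace_diagonal]
  exact Finset.sum_congr rfl fun i _ => by simp [Pi.mul_apply]; ring

lemma count_one (l : Fin 4 → ℝ) (i0 : Fin 4) (hpos : 0 < l i0) (hneg : ∀ i, i ≠ i0 → l i < 0) :
    Nat.card {i // 0 < l i} = 1 ∧ Nat.card {i // l i = 0} = 0 ∧ Nat.card {i // l i < 0} = 3 := by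
  classical
  have key : ∀ i, (0 < l i ↔ i = i0) ∧ (¬ l i = 0) ∧ (l i < 0 ↔ i ≠ i0) := by
    intro i
    by_cases h : i = i0
    · subst h; exact ⟨⟨fun _ => rfl, fun _ => hpos⟩, ne_of_gt hpos, by simp [not_lt.mpr hpos.le, hpos]⟩
    · have := hneg i h
      exact ⟨⟨fun hp => absurd this (not_lt.mpr hp.le), fun he => absurd he h⟩, ne_of_lt this,
        ⟨fun _ => h, fun _ => this⟩⟩
  refine ⟨?_, ?_, ?_⟩
  · rw [Nat.card_eq_fintype_card, Fintype.card_subtype]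
    rw [show Finset.univ.filter (fun i => 0 < l i) = {i0} by
      ext i; simp [(key i).1]]
    simp
  · rw [Nat.card_eq_fintype_card, Fintype.card_subtype]
    rw [show Finset.univ.filter (fun i => l i = 0) = ∅ by
      ext i; simp [(key i).2.1]]
    simp
  · rw [Nat.card_eq_fintype_card, Fintype.card_subtype]
    rw [show Finset.univ.filter (fun i => l i < 0) = Finset.univ.erase i0 by
      ext i; simp [(key i).2.2, Finset.mem_erase]]
    rw [Finset.card_erase_of_mem (Finset.mem_univ _)]
    simp

lemma inertia_fin4 (l : Fin 4 → ℝ) (hsum : ∑ i, l i = 0) (hprod : ∏ i, l i < 0)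
    (hcube : 0 < ∑ i, (l i)^3) :
    Nat.card {i // 0 < l i} = 1 ∧ Nat.card {i // l i = 0} = 0 ∧ Nat.card {i // l i < 0} = 3 := by
  rw [Fin.sum_univ_four] at hsum
  rw [Fin.prod_univ_four] at hprod
  rw [Fin.sum_univ_four] at hcube
  have hp4 : l 0 * l 1 * l 2 * l 3 ≠ 0 := ne_of_lt hprod
  have hne0 : l 0 ≠ 0 := fun h => hp4 (by rw [h]; ring)
  have hne1 : l 1 ≠ 0 := fun h => hp4 (by rw [h]; ring)
  have hne2 : l 2 ≠ 0 := fun h => hp4 (by rw [h]; ring)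
  have hne3 : l 3 ≠ 0 := fun h => hp4 (by rw [h]; ring)
  have h0 := hne0.lt_or_gt
  have h1 := hne1.lt_or_gt
  have h2 := hne2.lt_or_gt
  have h3 := hne3.lt_or_gt
  rcases h0 with h0 | h0 <;> rcases h1 with h1 | h1 <;> rcases h2 with h2 | h2 <;>
    rcases h3 with h3 | h3
  · linarith
  · exact count_one l 3 h3 (by intro i hi; fin_cases i <;> simp_all)
  · exact count_one l 2 h2 (by intro i hi; fin_cases i <;> simp_all)
  · exact absurd hprod (not_lt.mpr (le_of_lt (by nlinarith [mul_pos_of_neg_of_neg h0 h1, mul_pos h2 h3])))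
  · exact count_one l 1 h1 (by intro i hi; fin_cases i <;> simp_all)
  · exact absurd hprod (not_lt.mpr (le_of_lt (by nlinarith [mul_pos_of_neg_of_neg h0 h2, mul_pos h1 h3])))
  · exact absurd hprod (not_lt.mpr (le_of_lt (by nlinarith [mul_pos_of_neg_of_neg h0 h3, mul_pos h1 h2])))
  · exfalso
    have e : l 0 = -(l 1 + l 2 + l 3) := by linarith
    rw [e] at hcube
    nlinarith [mul_pos (mul_pos (add_pos h1 h2) (add_pos h2 h3)) (add_pos h1 h3)]
  · exact count_one l 0 h0 (by intro i hi; fin_cases i <;> simp_all)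
  · exact absurd hprod (not_lt.mpr (le_of_lt (by nlinarith [mul_pos_of_neg_of_neg h1 h2, mul_pos h0 h3])))
  · exact absurd hprod (not_lt.mpr (le_of_lt (by nlinarith [mul_pos_of_neg_of_neg h1 h3, mul_pos h0 h2])))
  · exfalso
    have e : l 1 = -(l 0 + l 2 + l 3) := by linarith
    rw [e] at hcube
    nlinarith [mul_pos (mul_pos (add_pos h0 h2) (add_pos h2 h3)) (add_pos h0 h3)]
  · exact absurd hprod (not_lt.mpr (le_of_lt (by nlinarith [mul_pos_of_neg_of_neg h2 h3, mul_pos h0 h1])))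
  · exfalso
    have e : l 2 = -(l 0 + l 1 + l 3) := by linarith
    rw [e] at hcube
    nlinarith [mul_pos (mul_pos (add_pos h0 h1) (add_pos h1 h3)) (add_pos h0 h3)]
  · exfalso
    have e : l 3 = -(l 0 + l 1 + l 2) := by linarith
    rw [e] at hcube
    nlinarith [mul_pos (mul_pos (add_pos h0 h1) (add_pos h1 h2)) (add_pos h0 h2)]
  · linarith

/-- The star on 4 vertices (center `0`) plus the edge `{1,2}`, with
positive weights satisfying the strict triangle condition on the 3-cycle (so the
added edge is not redundant), has distance matrix of inertia `(1, 0, 3)`. -/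
theorem star4_plus_edge_inertia (G : SimpleGraph (Fin 4))
    (hG : ∀ i j, G.Adj i j ↔ i ≠ j ∧ (i = 0 ∨ j = 0 ∨ s(i, j) = s(1, 2)))
    (w : Sym2 (Fin 4) → ℝ) (hw : ∀ e ∈ G.edgeSet, 0 < w e)
    (htri_lo : |w s(0, 1) - w s(0, 2)| < w s(1, 2))
    (htri_hi : w s(1, 2) < w s(0, 1) + w s(0, 2))
    (hD : (distMatrix G w).IsHermitian) :
    posEig hD = 1 ∧ zeroEig hD = 0 ∧ negEig hD = 3 := by
  obtain ⟨h1, h2⟩ := abs_sub_lt_iff.mp htri_lo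
  have hadj01 : G.Adj 0 1 := (hG 0 1).mpr (by decide)
  have hadj02 : G.Adj 0 2 := (hG 0 2).mpr (by decide)
  have hadj03 : G.Adj 0 3 := (hG 0 3).mpr (by decide)
  have hadj12 : G.Adj 1 2 := (hG 1 2).mpr (by decide)
  have ha : 0 < w s(0,1) := hw _ ((SimpleGraph.mem_edgeSet G).mpr hadj01)
  have hb : 0 < w s(0,2) := hw _ ((SimpleGraph.mem_edgeSet G).mpr hadj02)
  have hc : 0 < w s(0,3) := hw _ ((SimpleGraph.mem_edgeSet G).mpr hadj03)
  have hd : 0 < w s(1,2) := hw _ ((SimpleGraph.mem_edgeSet G).mpr hadj12)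
  set M := Mmat (w s(0,1)) (w s(0,2)) (w s(0,3)) (w s(1,2)) with hMdef
  have hfin : ∀ u : Fin 4, u = 0 ∨ u = 1 ∨ u = 2 ∨ u = 3 := by decide
  have e10 : w s((1:Fin 4),(0:Fin 4)) = w s(0,1) := by rw [Sym2.eq_swap]
  have e20 : w s((2:Fin 4),(0:Fin 4)) = w s(0,2) := by rw [Sym2.eq_swap]
  have e30 : w s((3:Fin 4),(0:Fin 4)) = w s(0,3) := by rw [Sym2.eq_swap]
  have e21 : w s((2:Fin 4),(1:Fin 4)) = w s(1,2) := by rw [Sym2.eq_swap]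
  have step : ∀ u x v : Fin 4, G.Adj u x → M u v ≤ w s(u, x) + M x v := by
    intro u x v h
    rw [hG] at h
    rcases hfin u with rfl|rfl|rfl|rfl <;> rcases hfin x with rfl|rfl|rfl|rfl <;>
        rcases hfin v with rfl|rfl|rfl|rfl <;>
      first
        | (exact absurd h (by decide))
        | (simp only [hMdef, Mmat, Matrix.cons_val_zero, Matrix.cons_val_one, Matrix.head_cons,
            Matrix.cons_val_two, Matrix.cons_val_three, Matrix.head_fin_const, Matrix.of_apply,
            Matrix.cons_val', Matrix.empty_val', Matrix.cons_val_fin_one, Matrix.vecTail,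
            Matrix.vecHead, Matrix.cons_val_succ, Function.comp_apply, Fin.isValue,
            e10, e20, e30, e21]
           linarith)
  have hdiag : ∀ v : Fin 4, M v v = 0 := by
    intro v
    rcases hfin v with rfl|rfl|rfl|rfl <;>
      simp [hMdef, Mmat, Matrix.cons_val_two, Matrix.cons_val_three]
  have hlb : ∀ (u v : Fin 4) (p : G.Walk u v), M u v ≤ walkWeight w p := by
    intro u v p
    induction p with
    | nil => rw [walkWeight_nil, hdiag]
    | cons h q ih =>
      rw [walkWeight_cons]
      calc M _ _ ≤ w s(_, _) + M _ _ := step _ _ _ h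
        _ ≤ _ := by linarith
  have hwd : ∀ (u v : Fin 4) (p : G.Walk u v), walkWeight w p = M u v →
      wdist G w u v = M u v := by
    intro u v p hp
    exact IsLeast.csInf_eq ⟨⟨p, hp⟩, by rintro x ⟨q, rfl⟩; exact hlb u v q⟩
  have hM : distMatrix G w = M := by
    ext i j
    show wdist G w i j = M i j
    rcases hfin i with rfl|rfl|rfl|rfl <;> rcases hfin j with rfl|rfl|rfl|rfl
    · exact hwd 0 0 SimpleGraph.Walk.nil (by rw [walkWeight_nil, hdiag])
    · exact hwd 0 1 (SimpleGraph.Walk.cons hadj01 SimpleGraph.Walk.nil)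
        (by rw [walkWeight_cons, walkWeight_nil]; simp [hMdef, Mmat])
    · exact hwd 0 2 (SimpleGraph.Walk.cons hadj02 SimpleGraph.Walk.nil)
        (by rw [walkWeight_cons, walkWeight_nil]; simp [hMdef, Mmat, Matrix.cons_val_two])
    · exact hwd 0 3 (SimpleGraph.Walk.cons hadj03 SimpleGraph.Walk.nil)
        (by rw [walkWeight_cons, walkWeight_nil]; simp [hMdef, Mmat, Matrix.cons_val_three])
    · exact hwd 1 0 (SimpleGraph.Walk.cons hadj01.symm SimpleGraph.Walk.nil)
        (by rw [walkWeight_cons, walkWeight_nil, e10]; simp [hMdef, Mmat])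
    · exact hwd 1 1 SimpleGraph.Walk.nil (by rw [walkWeight_nil, hdiag])
    · exact hwd 1 2 (SimpleGraph.Walk.cons hadj12 SimpleGraph.Walk.nil)
        (by rw [walkWeight_cons, walkWeight_nil]; simp [hMdef, Mmat, Matrix.cons_val_two])
    · exact hwd 1 3 (SimpleGraph.Walk.cons hadj01.symm (SimpleGraph.Walk.cons hadj03 SimpleGraph.Walk.nil))
        (by rw [walkWeight_cons, walkWeight_cons, walkWeight_nil, e10]
            simp [hMdef, Mmat, Matrix.cons_val_three])
    · exact hwd 2 0 (SimpleGraph.Walk.cons hadj02.symm SimpleGraph.Walk.nil)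
        (by rw [walkWeight_cons, walkWeight_nil, e20]; simp [hMdef, Mmat, Matrix.cons_val_two])
    · exact hwd 2 1 (SimpleGraph.Walk.cons hadj12.symm SimpleGraph.Walk.nil)
        (by rw [walkWeight_cons, walkWeight_nil, e21]; simp [hMdef, Mmat, Matrix.cons_val_two])
    · exact hwd 2 2 SimpleGraph.Walk.nil (by rw [walkWeight_nil, hdiag])
    · exact hwd 2 3 (SimpleGraph.Walk.cons hadj02.symm (SimpleGraph.Walk.cons hadj03 SimpleGraph.Walk.nil))
        (by rw [walkWeight_cons, walkWeight_cons, walkWeight_nil, e20]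
            simp [hMdef, Mmat, Matrix.cons_val_two, Matrix.cons_val_three])
    · exact hwd 3 0 (SimpleGraph.Walk.cons hadj03.symm SimpleGraph.Walk.nil)
        (by rw [walkWeight_cons, walkWeight_nil, e30]; simp [hMdef, Mmat, Matrix.cons_val_three])
    · exact hwd 3 1 (SimpleGraph.Walk.cons hadj03.symm (SimpleGraph.Walk.cons hadj01 SimpleGraph.Walk.nil))
        (by rw [walkWeight_cons, walkWeight_cons, walkWeight_nil, e30]
            simp [hMdef, Mmat, Matrix.cons_val_three]; ring)
    · exact hwd 3 2 (SimpleGraph.Walk.cons hadj03.symm (SimpleGraph.Walk.cons hadj02 SimpleGraph.Walk.nil))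
        (by rw [walkWeight_cons, walkWeight_cons, walkWeight_nil, e30]
            simp [hMdef, Mmat, Matrix.cons_val_two, Matrix.cons_val_three]; ring)
    · exact hwd 3 3 SimpleGraph.Walk.nil (by rw [walkWeight_nil, hdiag])
  -- eigenvalue computations
  have hsum : ∑ i, hD.eigenvalues i = 0 := by
    rw [eig_trace hD, hM]
    simp [hMdef, Mmat, Matrix.trace, Matrix.diag, Fin.sum_univ_four,
      Matrix.cons_val_two, Matrix.cons_val_three]
  have hdet : det M = (w s(0,1))^2*(w s(0,3))^2 + (w s(0,2))^2*(w s(0,3))^2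
      + (w s(0,3))^2*(w s(1,2))^2 - 4*(w s(0,1))*(w s(0,2))*(w s(0,3))*(w s(1,2))
      - 2*(w s(0,1))*(w s(0,3))^2*(w s(1,2)) - 2*(w s(0,1))*(w s(0,2))*(w s(0,3))^2
      - 2*(w s(0,2))*(w s(0,3))^2*(w s(1,2)) := by
    rw [hMdef]
    show det (Mmat _ _ _ _) = _
    rw [Mmat]
    simp only [Matrix.det_succ_row_zero, Fin.sum_univ_succ, Matrix.det_fin_zero]
    norm_num [Fin.succAbove, Fin.lt_def, Fin.castSucc, Fin.castAdd, Fin.castLE,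
      Matrix.cons_val_two, Matrix.cons_val_three]
    ring
  have hprod : ∏ i, hD.eigenvalues i < 0 := by
    have h := hD.det_eq_prod_eigenvalues
    simp only [RCLike.ofReal_real_eq_id, id] at h
    have key : (w s(0,1))^2*(w s(0,3))^2 + (w s(0,2))^2*(w s(0,3))^2
        + (w s(0,3))^2*(w s(1,2))^2 - 4*(w s(0,1))*(w s(0,2))*(w s(0,3))*(w s(1,2))
        - 2*(w s(0,1))*(w s(0,3))^2*(w s(1,2)) - 2*(w s(0,1))*(w s(0,2))*(w s(0,3))^2
        - 2*(w s(0,2))*(w s(0,3))^2*(w s(1,2)) < 0 := by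
      nlinarith [mul_pos (mul_pos (mul_pos hc hc) (by linarith : (0:ℝ) < w s(1,2) - w s(0,1) + w s(0,2)))
          (by linarith : (0:ℝ) < w s(1,2) + w s(0,1) - w s(0,2)),
        mul_pos (mul_pos (mul_pos hc hc) hd)
          (by linarith : (0:ℝ) < w s(0,1) + w s(0,2) - w s(1,2)),
        mul_pos (mul_pos (mul_pos ha hb) hc) hd]
    calc ∏ i, hD.eigenvalues i = det (distMatrix G w) := h.symm
      _ < 0 := by rw [hM, hdet]; exact key
  have hcube : 0 < ∑ i, (hD.eigenvalues i)^3 := by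
    rw [eig_trace3 hD, hM]
    have htr : (M * M * M).trace = 12*(w s(0,1))*(w s(0,2))*(w s(1,2))
        + 6*(w s(0,1))^2*(w s(0,3)) + 6*(w s(0,1))*(w s(0,3))^2
        + 6*(w s(0,2))^2*(w s(0,3)) + 6*(w s(0,2))*(w s(0,3))^2
        + 6*(w s(0,1))*(w s(0,3))*(w s(1,2)) + 6*(w s(0,2))*(w s(0,3))*(w s(1,2))
        + 6*(w s(0,3))^2*(w s(1,2)) := by
      rw [hMdef]
      show trace (Mmat _ _ _ _ * Mmat _ _ _ _ * Mmat _ _ _ _) = _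
      rw [Mmat]
      norm_num [Matrix.trace, Matrix.mul_apply, Fin.sum_univ_four, Matrix.cons_val_two,
        Matrix.cons_val_three, Matrix.diag]
      ring
    rw [htr]
    nlinarith [mul_pos (mul_pos ha hb) hd, mul_pos (mul_pos ha ha) hc,
      mul_pos (mul_pos ha hc) hc, mul_pos (mul_pos hb hb) hc,
      mul_pos (mul_pos hb hc) hc, mul_pos (mul_pos ha hc) hd,
      mul_pos (mul_pos hb hc) hd, mul_pos (mul_pos hc hc) hd]
  exact inertia_fin4 hD.eigenvalues hsum hprod hcube
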